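/- Let f be a homogeneous polynomial of degree 2 in n variables with real coefficients and let r ≥ 2 be an integer. Then f_{Δ(n,r)} − f̲ ≤ (1/r) (f̄ − f̲). -/

import Mathlib

open Finset

noncomputable section

/-- Falling factorial `t^(d) = t (t-1) ⋯ (t-d+1)`. -/
def fall (t : ℝ) : ℕ → ℝ
  | 0 => 1
  | d + 1 => fall t d * (t - (d : ℝ))

/-- The regular grid `Δ(n,r) = {x ∈ Δ_n : r·x ∈ ℕ^n}`. -/
def regularGrid (n r : ℕ) : Set (Fin n → ℝ) :=
  {x ∈ stdSimplex ℝ (Fin n) | ∀ i, ∃ k : ℕ, (r : ℝ) * x i = (k : ℝ)}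

/-- `f_{Δ(n,r)}`, the minimum of `f` over the regular grid. -/
def minGrid (n r : ℕ) (f : (Fin n → ℝ) → ℝ) : ℝ :=
  sInf (f '' regularGrid n r)

/-- `f̲`, the minimum of `f` over the standard simplex. -/
def minSimplex (n : ℕ) (f : (Fin n → ℝ) → ℝ) : ℝ :=
  sInf (f '' stdSimplex ℝ (Fin n))

/-- `f̄`, the maximum of `f` over the standard simplex. -/
def maxSimplex (n : ℕ) (f : (Fin n → ℝ) → ℝ) : ℝ :=
  sSup (f '' stdSimplex ℝ (Fin n))

/-- The homogeneous polynomial of degree `d` with coefficients `c`,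
`f(x) = Σ_{β ∈ I(n,d)} c_β x^β`. -/
def homPoly (n d : ℕ) (c : (Fin n → ℕ) → ℝ) (x : Fin n → ℝ) : ℝ :=
  ∑ β ∈ Finset.Nat.antidiagonalTuple n d, c β * ∏ i, x i ^ β i

/-- The Pólya-type lower bound
`f_min^{(r-d)} = min_{α ∈ I(n,r)} Σ_{β ∈ I(n,d)} c_β α^{(β)} / r^{(d)}`. -/
def polyaBound (n d r : ℕ) (c : (Fin n → ℕ) → ℝ) : ℝ :=
  sInf ((fun α : Fin n → ℕ =>
      (∑ β ∈ Finset.Nat.antidiagonalTuple n d,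
        c β * ∏ i, fall ((α i : ℕ) : ℝ) (β i)) / fall (r : ℝ) d) ''
    {α : Fin n → ℕ | ∑ i, α i = r})

/-- A monomial of total degree 2 is a product of two coordinates. -/
lemma mono2 {n : ℕ} (β : Fin n → ℕ) (hβ : ∑ i, β i = 2) :
    ∃ a b : Fin n, ∀ z : Fin n → ℝ, ∏ i, z i ^ β i = z a * z b := by
  set M : Multiset (Fin n) :=
    Multiset.bind Finset.univ.val (fun i => Multiset.replicate (β i) i) with hM
  have hcard : Multiset.card M = 2 := by
    rw [hM, Multiset.card_bind]
    simpa [List.sum_ofFn] using hβ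
  obtain ⟨a, b, hab⟩ := Multiset.card_eq_two.mp hcard
  refine ⟨a, b, fun z => ?_⟩
  have h1 : (M.map z).prod = ∏ i, z i ^ β i := by
    rw [hM, Multiset.map_bind, Multiset.prod_bind]
    simp [Multiset.map_replicate, Multiset.prod_replicate, List.prod_ofFn]
  rw [← h1, hab]
  simp

/-- The multinomial expectation of a degree-2 monomial over the grid. -/
lemma exp_mono {n r : ℕ} (hr : 0 < r) (x : Fin n → ℝ) (hx1 : ∑ i, x i = 1)
    (a b : Fin n) :
    ∑ σ : Fin r → Fin n, (∏ k, x (σ k)) *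
      ((((univ.filter fun k => σ k = a).card : ℝ) / r) *
       (((univ.filter fun k => σ k = b).card : ℝ) / r))
    = (1 - 1/(r:ℝ)) * (x a * x b) + 1/(r:ℝ) * (if a = b then x a else 0) := by
  have hr0 : (r:ℝ) ≠ 0 := Nat.cast_ne_zero.mpr hr.ne'
  have hN : ∀ (σ : Fin r → Fin n) (i : Fin n),
      (((univ.filter fun k => σ k = i).card : ℝ)) = ∑ k, if σ k = i then (1:ℝ) else 0 := by
    intro σ i
    rw [Finset.card_filter]
    push_cast
    rfl
  have key : ∀ k l : Fin r,
      (∑ σ : Fin r → Fin n, (∏ m, x (σ m)) *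
        ((if σ k = a then (1:ℝ) else 0) * (if σ l = b then (1:ℝ) else 0)))
      = if k = l then (if a = b then x a else 0) else x a * x b := by
    intro k l
    have hswap : ∀ σ : Fin r → Fin n,
        (∏ m, x (σ m)) * ((if σ k = a then (1:ℝ) else 0) * (if σ l = b then (1:ℝ) else 0))
        = ∏ m, (x (σ m) * ((if m = k then (if σ m = a then (1:ℝ) else 0) else 1) *
            (if m = l then (if σ m = b then (1:ℝ) else 0) else 1))) := by
      intro σ
      rw [Finset.prod_mul_distrib, Finset.prod_mul_distrib]
      congr 1
      congr 1
      · rw [Finset.prod_ite_eq' univ k (fun m => if σ m = a then (1:ℝ) else 0)]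
        simp
      · rw [Finset.prod_ite_eq' univ l (fun m => if σ m = b then (1:ℝ) else 0)]
        simp
    have hexch := Finset.prod_univ_sum (t := fun _ : Fin r => (univ : Finset (Fin n)))
      (f := fun m j => x j * ((if m = k then (if j = a then (1:ℝ) else 0) else 1) *
            (if m = l then (if j = b then (1:ℝ) else 0) else 1)))
    rw [Fintype.piFinset_univ] at hexch
    calc (∑ σ : Fin r → Fin n, (∏ m, x (σ m)) *
        ((if σ k = a then (1:ℝ) else 0) * (if σ l = b then (1:ℝ) else 0)))
        = ∑ σ : Fin r → Fin n, ∏ m, (x (σ m) *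
            ((if m = k then (if σ m = a then (1:ℝ) else 0) else 1) *
             (if m = l then (if σ m = b then (1:ℝ) else 0) else 1))) :=
          Finset.sum_congr rfl fun σ _ => hswap σ
      _ = ∏ m : Fin r, ∑ j : Fin n, (x j * ((if m = k then (if j = a then (1:ℝ) else 0) else 1) *
            (if m = l then (if j = b then (1:ℝ) else 0) else 1))) := hexch.symm
      _ = if k = l then (if a = b then x a else 0) else x a * x b := by
          by_cases hkl : k = l
          · subst hkl
            rw [if_pos rfl]
            rw [Finset.prod_eq_single k]
            · simp only [if_pos rfl]
              by_cases hab : a = b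
              · subst hab
                simp [mul_ite, Finset.sum_ite_eq']
              · rw [if_neg hab]
                refine Finset.sum_eq_zero fun j _ => ?_
                by_cases hj : j = a
                · simp [hj, hab]
                · simp [hj]
            · intro m _ hm
              simp [hm, hx1]
            · simp
          · rw [if_neg hkl]
            rw [← Finset.mul_prod_erase univ _ (mem_univ k),
                ← Finset.mul_prod_erase _ _ (Finset.mem_erase.mpr ⟨Ne.symm hkl, mem_univ l⟩)]
            have h1 : ∑ j : Fin n, (x j * ((if k = k then (if j = a then (1:ℝ) else 0) else 1) *
                (if k = l then (if j = b then (1:ℝ) else 0) else 1))) = x a := by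
              simp [hkl, mul_ite, Finset.sum_ite_eq']
            have h2 : ∑ j : Fin n, (x j * ((if l = k then (if j = a then (1:ℝ) else 0) else 1) *
                (if l = l then (if j = b then (1:ℝ) else 0) else 1))) = x b := by
              simp [Ne.symm hkl, mul_ite, Finset.sum_ite_eq']
            rw [h1, h2]
            rw [Finset.prod_eq_one]
            · ring
            · intro m hm
              rw [Finset.mem_erase, Finset.mem_erase] at hm
              simp [hm.1, hm.2.1, hx1]
  calc ∑ σ : Fin r → Fin n, (∏ k, x (σ k)) *
      ((((univ.filter fun k => σ k = a).card : ℝ) / r) *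
       (((univ.filter fun k => σ k = b).card : ℝ) / r))
      = ∑ σ : Fin r → Fin n, (1/(r:ℝ)^2) * ((∏ m, x (σ m)) *
          ((∑ k, if σ k = a then (1:ℝ) else 0) * (∑ l, if σ l = b then (1:ℝ) else 0))) := by
        refine Finset.sum_congr rfl fun σ _ => ?_
        rw [hN σ a, hN σ b]
        ring
    _ = ∑ σ : Fin r → Fin n, ∑ k : Fin r, ∑ l : Fin r, (1/(r:ℝ)^2) * ((∏ m, x (σ m)) *
          ((if σ k = a then (1:ℝ) else 0) * (if σ l = b then (1:ℝ) else 0))) := by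
        refine Finset.sum_congr rfl fun σ _ => ?_
        rw [Finset.sum_mul_sum]
        simp only [Finset.mul_sum]
    _ = ∑ k : Fin r, ∑ l : Fin r, (1/(r:ℝ)^2) * ∑ σ : Fin r → Fin n, ((∏ m, x (σ m)) *
          ((if σ k = a then (1:ℝ) else 0) * (if σ l = b then (1:ℝ) else 0))) := by
        rw [Finset.sum_comm]
        refine Finset.sum_congr rfl fun k _ => ?_
        rw [Finset.sum_comm]
        refine Finset.sum_congr rfl fun l _ => ?_
        rw [Finset.mul_sum]
    _ = ∑ k : Fin r, ∑ l : Fin r, (1/(r:ℝ)^2) *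
          (if k = l then (if a = b then x a else 0) else x a * x b) :=
        Finset.sum_congr rfl fun k _ => Finset.sum_congr rfl fun l _ => by rw [key k l]
    _ = (1 - 1/(r:ℝ)) * (x a * x b) + 1/(r:ℝ) * (if a = b then x a else 0) := by
        have hinner : ∀ k : Fin r, (∑ l : Fin r, (1/(r:ℝ)^2) *
            (if k = l then (if a = b then x a else 0) else x a * x b))
            = (1/(r:ℝ)^2) * ((r:ℝ) * (x a * x b) + ((if a = b then x a else 0) - x a * x b)) := by
          intro k
          rw [← Finset.mul_sum]
          congr 1
          have h : ∀ l : Fin r, (if k = l then (if a = b then x a else 0) else x a * x b)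
              = x a * x b + (if k = l then (if a = b then x a else 0) - x a * x b else 0) := by
            intro l; by_cases h : k = l <;> simp [h]
          simp only [h, Finset.sum_add_distrib, Finset.sum_const, Finset.sum_ite_eq,
            card_univ, Fintype.card_fin, mem_univ, if_true, nsmul_eq_mul]
        simp only [hinner, Finset.sum_const, card_univ, Fintype.card_fin, nsmul_eq_mul]
        field_simp
        ring

/-- Every multinomial frequency vector lies on the regular grid. -/
lemma ymem {n r : ℕ} (hr : 0 < r) (σ : Fin r → Fin n) :
    (fun i => (((univ.filter fun k => σ k = i).card : ℝ) / r)) ∈ regularGrid n r := by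
  have hrR : (r:ℝ) ≠ 0 := Nat.cast_ne_zero.mpr hr.ne'
  refine ⟨⟨fun i => by positivity, ?_⟩,
    fun i => ⟨(univ.filter fun k => σ k = i).card, by field_simp⟩⟩
  rw [← Finset.sum_div]
  rw [show ∑ i, (((univ.filter fun k => σ k = i).card : ℝ)) = (r:ℝ) from ?_]
  · exact div_self hrR
  · rw_mod_cast [← Finset.card_eq_sum_card_fiberwise (f := σ) (t := univ) (fun x _ => mem_univ _)]
    simp

lemma grid_finite (n r : ℕ) (hr : 0 < r) : (regularGrid n r).Finite := by
  have hrR : (r:ℝ) ≠ 0 := Nat.cast_ne_zero.mpr hr.ne'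
  have hsub : regularGrid n r ⊆
      (fun α : Fin n → ℕ => fun i => (α i : ℝ) / r) '' (Set.pi Set.univ fun _ => Set.Iic r) := by
    rintro x ⟨hxs, hxg⟩
    choose k hk using hxg
    refine ⟨k, fun i _ => ?_, ?_⟩
    · have hx1 : x i ≤ 1 := by
        rw [← hxs.2]
        exact Finset.single_le_sum (fun j _ => hxs.1 j) (mem_univ i)
      have : (k i : ℝ) ≤ (r : ℝ) := by
        rw [← hk i]
        calc (r:ℝ) * x i ≤ (r:ℝ) * 1 :=
          mul_le_mul_of_nonneg_left hx1 (Nat.cast_nonneg r)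
        _ = r := mul_one _
      exact_mod_cast this
    · funext i
      show (k i : ℝ) / r = x i
      rw [← hk i]
      field_simp
  exact Set.Finite.subset (Set.Finite.image _ (Set.Finite.pi fun _ => Set.finite_Iic r)) hsub

/-- The core inequality: the grid minimum is at most the multinomial
average `(1-1/r) f(x) + (1/r) Σᵢ xᵢ f(eᵢ)`. -/
lemma core {n r : ℕ} (hn : 0 < n) (hr : 2 ≤ r) (c : (Fin n → ℕ) → ℝ)
    {x : Fin n → ℝ} (hx : x ∈ stdSimplex ℝ (Fin n)) :
    minGrid n r (homPoly n 2 c) ≤ (1 - 1/(r:ℝ)) * homPoly n 2 c x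
      + (1/(r:ℝ)) * ∑ i, x i * homPoly n 2 c (Pi.single i 1) := by
  have hr0 : 0 < r := by omega
  have hx0 := hx.1
  have hx1 := hx.2
  have hABex : ∀ β : Fin n → ℕ, ∃ ab : Fin n × Fin n,
      β ∈ Finset.Nat.antidiagonalTuple n 2 →
      ∀ z : Fin n → ℝ, ∏ i, z i ^ β i = z ab.1 * z ab.2 := by
    intro β
    by_cases h : β ∈ Finset.Nat.antidiagonalTuple n 2
    · obtain ⟨a, b, hab⟩ := mono2 β (Finset.Nat.mem_antidiagonalTuple.mp h)
      exact ⟨(a, b), fun _ => hab⟩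
    · exact ⟨(⟨0, hn⟩, ⟨0, hn⟩), fun h' => absurd h' h⟩
  choose AB hAB using hABex
  set T := Finset.Nat.antidiagonalTuple n 2 with hT
  have hfz : ∀ z : Fin n → ℝ, homPoly n 2 c z = ∑ β ∈ T, c β * (z (AB β).1 * z (AB β).2) :=
    fun z => Finset.sum_congr rfl fun β hβ => by rw [hAB β hβ z]
  set y : (Fin r → Fin n) → (Fin n → ℝ) :=
    fun σ => fun i => (((univ.filter fun k => σ k = i).card : ℝ) / r) with hy
  have hymem : ∀ σ, y σ ∈ regularGrid n r := fun σ => ymem hr0 σ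
  have hbdd : BddBelow (homPoly n 2 c '' regularGrid n r) :=
    ((grid_finite n r hr0).image _).bddBelow
  have hle : ∀ σ : Fin r → Fin n, minGrid n r (homPoly n 2 c) ≤ homPoly n 2 c (y σ) :=
    fun σ => csInf_le hbdd ⟨y σ, hymem σ, rfl⟩
  have hw0 : ∀ σ : Fin r → Fin n, 0 ≤ ∏ k, x (σ k) :=
    fun σ => Finset.prod_nonneg fun k _ => hx0 _
  have hwsum : ∑ σ : Fin r → Fin n, ∏ k, x (σ k) = 1 := by
    have h := Finset.prod_univ_sum (t := fun _ : Fin r => (univ : Finset (Fin n)))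
      (f := fun _ j => x j)
    rw [Fintype.piFinset_univ] at h
    rw [← h]
    simp [hx1]
  have step1 : minGrid n r (homPoly n 2 c) ≤
      ∑ σ : Fin r → Fin n, (∏ k, x (σ k)) * homPoly n 2 c (y σ) := by
    calc minGrid n r (homPoly n 2 c)
        = ∑ σ : Fin r → Fin n, (∏ k, x (σ k)) * minGrid n r (homPoly n 2 c) := by
          rw [← Finset.sum_mul, hwsum, one_mul]
      _ ≤ _ := Finset.sum_le_sum fun σ _ =>
          mul_le_mul_of_nonneg_left (hle σ) (hw0 σ)
  have hsingle : ∀ i : Fin n, homPoly n 2 c (Pi.single i (1:ℝ))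
      = ∑ β ∈ T, c β * ((if (AB β).1 = i then (1:ℝ) else 0) * (if (AB β).2 = i then (1:ℝ) else 0)) := by
    intro i
    rw [hfz]
    refine Finset.sum_congr rfl fun β _ => ?_
    rw [Pi.single_apply, Pi.single_apply]
  have hdiag : ∑ i, x i * homPoly n 2 c (Pi.single i (1:ℝ))
      = ∑ β ∈ T, c β * (if (AB β).1 = (AB β).2 then x (AB β).1 else 0) := by
    calc ∑ i, x i * homPoly n 2 c (Pi.single i (1:ℝ))
        = ∑ i, ∑ β ∈ T, c β * (x i * ((if (AB β).1 = i then (1:ℝ) else 0) *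
            (if (AB β).2 = i then (1:ℝ) else 0))) := by
          refine Finset.sum_congr rfl fun i _ => ?_
          rw [hsingle i, Finset.mul_sum]
          exact Finset.sum_congr rfl fun β _ => by ring
      _ = ∑ β ∈ T, ∑ i, c β * (x i * ((if (AB β).1 = i then (1:ℝ) else 0) *
            (if (AB β).2 = i then (1:ℝ) else 0))) := Finset.sum_comm
      _ = ∑ β ∈ T, c β * (if (AB β).1 = (AB β).2 then x (AB β).1 else 0) := by
          refine Finset.sum_congr rfl fun β _ => ?_
          rw [← Finset.mul_sum]
          congr 1
          by_cases h : (AB β).1 = (AB β).2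
          · rw [if_pos h, ← h]
            simp [mul_ite, Finset.sum_ite_eq]
          · rw [if_neg h]
            refine Finset.sum_eq_zero fun i _ => ?_
            by_cases hi : (AB β).1 = i
            · have h2 : (AB β).2 ≠ i := fun hh => h (hi.trans hh.symm)
              simp [hi, h2]
            · simp [hi]
  have hexp : ∑ σ : Fin r → Fin n, (∏ k, x (σ k)) * homPoly n 2 c (y σ)
      = (1 - 1/(r:ℝ)) * homPoly n 2 c x + (1/(r:ℝ)) * ∑ i, x i * homPoly n 2 c (Pi.single i 1) := by
    calc ∑ σ : Fin r → Fin n, (∏ k, x (σ k)) * homPoly n 2 c (y σ)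
        = ∑ σ : Fin r → Fin n, ∑ β ∈ T, c β * ((∏ k, x (σ k)) * (y σ (AB β).1 * y σ (AB β).2)) := by
          refine Finset.sum_congr rfl fun σ _ => ?_
          rw [hfz (y σ), Finset.mul_sum]
          exact Finset.sum_congr rfl fun β _ => by ring
      _ = ∑ β ∈ T, c β * ∑ σ : Fin r → Fin n, (∏ k, x (σ k)) * (y σ (AB β).1 * y σ (AB β).2) := by
          rw [Finset.sum_comm]
          exact Finset.sum_congr rfl fun β _ => by rw [Finset.mul_sum]
      _ = ∑ β ∈ T, c β * ((1 - 1/(r:ℝ)) * (x (AB β).1 * x (AB β).2)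
            + 1/(r:ℝ) * (if (AB β).1 = (AB β).2 then x (AB β).1 else 0)) := by
          refine Finset.sum_congr rfl fun β _ => ?_
          congr 1
          simp only [hy]
          exact exp_mono hr0 x hx1 (AB β).1 (AB β).2
      _ = (1 - 1/(r:ℝ)) * (∑ β ∈ T, c β * (x (AB β).1 * x (AB β).2))
            + (1/(r:ℝ)) * ∑ β ∈ T, c β * (if (AB β).1 = (AB β).2 then x (AB β).1 else 0) := by
          rw [Finset.mul_sum, Finset.mul_sum, ← Finset.sum_add_distrib]
          exact Finset.sum_congr rfl fun β _ => by ring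
      _ = _ := by rw [← hfz x, hdiag]
  rw [← hexp]
  exact step1

/-- for `f` homogeneous of degree 2 and `r ≥ 2`,
`f_{Δ(n,r)} − f̲ ≤ (1/r)(f̄ − f̲)`. -/
theorem statement4 (n r : ℕ) (hn : 0 < n) (hr : 2 ≤ r) (c : (Fin n → ℕ) → ℝ) :
    minGrid n r (homPoly n 2 c) - minSimplex n (homPoly n 2 c) ≤
      (1 / (r : ℝ)) * (maxSimplex n (homPoly n 2 c) - minSimplex n (homPoly n 2 c)) := by
  have hr0 : 0 < r := by omega
  have hrR : (0:ℝ) < r := by exact_mod_cast hr0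
  have hcont : Continuous (homPoly n 2 c) := by
    unfold homPoly
    exact continuous_finset_sum _ fun β _ => continuous_const.mul
      (continuous_finset_prod _ fun i _ => (continuous_apply i).pow _)
  have hK : IsCompact (homPoly n 2 c '' stdSimplex ℝ (Fin n)) :=
    (isCompact_stdSimplex ℝ (Fin n)).image hcont
  have hmem_single : ∀ i : Fin n, Pi.single i (1:ℝ) ∈ stdSimplex ℝ (Fin n) := by
    intro i
    constructor
    · intro j
      rw [Pi.single_apply]
      by_cases h : j = i <;> simp [h]
    · simp [Finset.sum_pi_single']
  have hsne : (stdSimplex ℝ (Fin n)).Nonempty := ⟨Pi.single ⟨0, hn⟩ 1, hmem_single _⟩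
  obtain ⟨xs, hxs, hxmin⟩ : ∃ xs ∈ stdSimplex ℝ (Fin n),
      homPoly n 2 c xs = minSimplex n (homPoly n 2 c) := by
    obtain ⟨xs, hxs, h⟩ := hK.sInf_mem (hsne.image _)
    exact ⟨xs, hxs, h⟩
  have hmax : ∀ i : Fin n, homPoly n 2 c (Pi.single i 1) ≤ maxSimplex n (homPoly n 2 c) :=
    fun i => le_csSup hK.bddAbove ⟨_, hmem_single i, rfl⟩
  have hcore := core hn hr c hxs
  have hsum_le : ∑ i, xs i * homPoly n 2 c (Pi.single i 1) ≤ maxSimplex n (homPoly n 2 c) := by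
    calc ∑ i, xs i * homPoly n 2 c (Pi.single i 1)
        ≤ ∑ i, xs i * maxSimplex n (homPoly n 2 c) :=
        Finset.sum_le_sum fun i _ => mul_le_mul_of_nonneg_left (hmax i) (hxs.1 i)
      _ = maxSimplex n (homPoly n 2 c) := by rw [← Finset.sum_mul, hxs.2, one_mul]
  rw [hxmin] at hcore
  have h1r : 0 < 1/(r:ℝ) := by positivity
  have hfin : minGrid n r (homPoly n 2 c) ≤
      (1 - 1/(r:ℝ)) * minSimplex n (homPoly n 2 c) +
      (1/(r:ℝ)) * maxSimplex n (homPoly n 2 c) := by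
    refine hcore.trans ?_
    have := mul_le_mul_of_nonneg_left hsum_le h1r.le
    linarith
  have hexpand : (1/(r:ℝ)) * (maxSimplex n (homPoly n 2 c) - minSimplex n (homPoly n 2 c))
      = (1/(r:ℝ)) * maxSimplex n (homPoly n 2 c) - (1/(r:ℝ)) * minSimplex n (homPoly n 2 c) := by
    ring
  have hexpand2 : (1 - 1/(r:ℝ)) * minSimplex n (homPoly n 2 c)
      = minSimplex n (homPoly n 2 c) - (1/(r:ℝ)) * minSimplex n (homPoly n 2 c) := by
    ring
  linarith
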